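/- If the abelian extension 1 → N → G → H → 1 splits, i.e., G = N ⋊ H, then the exact sequences 1 → Aut^{N,H}(G) → Aut_N^H(G) → C₁* → 1 and 1 → Aut^{N,H}(G) → Aut^N(G) → C₂* → 1 split: the maps θ ↦ (hn ↦ h·θ(n)) and φ ↦ (hn ↦ φ(h)·n) are group homomorphism sections with values in automorphisms of G. -/
import Mathlib


/-- The section ψ₁ : C₁* → Aut_N^H(G) for a split extension G = N ⋊ H:
ψ₁(θ)(hn) = h·θ(n), i.e. componentwise ⟨n,h⟩ ↦ ⟨θ(n),h⟩. -/
def psi₁ {N H : Type*} [CommGroup N] [Group H] (α : H →* MulAut N)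
    (θ : N ≃* N) : N ⋊[α] H → N ⋊[α] H :=
  fun g => ⟨θ g.left, g.right⟩

/-- The section ψ₂ : C₂* → Aut^N(G) for a split extension G = N ⋊ H:
ψ₂(φ)(hn) = φ(h)·n, i.e. componentwise ⟨n,h⟩ ↦ ⟨n,φ(h)⟩. -/
def psi₂ {N H : Type*} [CommGroup N] [Group H] (α : H →* MulAut N)
    (φ : H ≃* H) : N ⋊[α] H → N ⋊[α] H :=
  fun g => ⟨g.left, φ g.right⟩

def psi₁Equiv {N H : Type*} [CommGroup N] [Group H] (α : H →* MulAut N)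
    (θ : N ≃* N) (hθ : ∀ (h : H) (n : N), θ (α h n) = α h (θ n)) :
    N ⋊[α] H ≃* N ⋊[α] H where
  toFun := psi₁ α θ
  invFun := psi₁ α θ.symm
  left_inv g := by simp [psi₁]
  right_inv g := by simp [psi₁]
  map_mul' a b := by
    ext
    · simp [psi₁, hθ]
    · simp [psi₁]

def psi₂_aux {N H : Type*} [CommGroup N] [Group H] (α : H →* MulAut N)
    (φ : H ≃* H) (hφ : ∀ h : H, α (φ h) = α h) :
    N ⋊[α] H ≃* N ⋊[α] H where
  toFun := psi₂ α φ
  invFun := psi₂ α φ.symm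
  left_inv g := by simp [psi₂]
  right_inv g := by simp [psi₂]
  map_mul' a b := by
    ext
    · simp [psi₂, hφ]
    · simp [psi₂]

/-- If the abelian extension splits, G = N ⋊ H, then the sequences
1 → Aut^{N,H}(G) → Aut_N^H(G) → C₁* → 1 and 1 → Aut^{N,H}(G) → Aut^N(G) → C₂* → 1
split: for θ ∈ C₁* the map ψ₁(θ) and for φ ∈ C₂* the map ψ₂(φ) are automorphisms
of G (normalizing N, inducing the identity on H, resp. centralizing N), and
θ ↦ ψ₁(θ), φ ↦ ψ₂(φ) are group homomorphism sections. -/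
theorem stmt_19 {N H : Type*} [CommGroup N] [Group H] (α : H →* MulAut N) :
    (∀ θ : N ≃* N, (∀ (h : H) (n : N), θ (α h n) = α h (θ n)) →
      ∃ γ : N ⋊[α] H ≃* N ⋊[α] H,
        (⇑γ = psi₁ α θ) ∧
        (∀ n : N, γ (SemidirectProduct.inl n) = SemidirectProduct.inl (θ n)) ∧
        (∀ g : N ⋊[α] H, (γ g).right = g.right)) ∧
    (∀ θ₁ θ₂ : N ≃* N, psi₁ α (θ₁.trans θ₂) = psi₁ α θ₂ ∘ psi₁ α θ₁) ∧
    (∀ φ : H ≃* H, (∀ h : H, α (φ h) = α h) →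
      ∃ γ : N ⋊[α] H ≃* N ⋊[α] H,
        (⇑γ = psi₂ α φ) ∧
        (∀ n : N, γ (SemidirectProduct.inl n) = SemidirectProduct.inl n) ∧
        (∀ g : N ⋊[α] H, (γ g).right = φ g.right)) ∧
    (∀ φ₁ φ₂ : H ≃* H, psi₂ α (φ₁.trans φ₂) = psi₂ α φ₂ ∘ psi₂ α φ₁) := by
  refine ⟨?_, ?_, ?_, ?_⟩
  · intro θ hθ
    refine ⟨psi₁Equiv α θ hθ, rfl, fun n => ?_, fun g => rfl⟩
    ext
    · simp [psi₁Equiv, psi₁]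
    · simp [psi₁Equiv, psi₁]
  · intro θ₁ θ₂; funext g; rfl
  · intro φ hφ
    refine ⟨psi₂_aux α φ hφ, rfl, fun n => ?_, fun g => rfl⟩
    ext
    · simp [psi₂_aux, psi₂]
    · simp [psi₂_aux, psi₂]
  · intro φ₁ φ₂; funext g; rfl
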